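/- If A_G is a maximum independent set of G and A_H is a maximum independent set of H, then A_G × A_H is a maximum independent set of the lexicographic product G∘H. -/

import Mathlib

open SimpleGraph

/-- The lexicographic product of simple graphs. -/
def SimpleGraph.lexProd {α β : Type*} (G : SimpleGraph α) (H : SimpleGraph β) :
    SimpleGraph (α × β) where
  Adj x y := G.Adj x.1 y.1 ∨ (x.1 = y.1 ∧ H.Adj x.2 y.2)
  symm := by
    constructor
    rintro ⟨g1, h1⟩ ⟨g2, h2⟩ (h | ⟨rfl, h⟩)
    · exact Or.inl h.symm
    · exact Or.inr ⟨rfl, h.symm⟩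
  loopless := by
    constructor
    rintro ⟨g, h⟩ (h' | ⟨-, h'⟩)
    · exact G.irrefl h'
    · exact H.irrefl h'

/-- A set of vertices is independent if its vertices are pairwise non-adjacent. -/
def SimpleGraph.IndepSet {α : Type*} (G : SimpleGraph α) (s : Set α) : Prop :=
  ∀ u ∈ s, ∀ v ∈ s, u ≠ v → ¬ G.Adj u v

/-- The independence number: the largest cardinality of an independent set. -/
noncomputable def SimpleGraph.indepNum' {α : Type*} [Fintype α] (G : SimpleGraph α) : ℕ :=
  sSup {n | ∃ s : Finset α, G.IndepSet ↑s ∧ s.card = n}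

/-- An `i`-packing: a set of vertices pairwise at distance greater than `i`. -/
def SimpleGraph.IsPacking {α : Type*} (G : SimpleGraph α) (i : ℕ) (s : Set α) : Prop :=
  ∀ u ∈ s, ∀ v ∈ s, u ≠ v → i < G.dist u v

/-- The `i`-packing number: the largest cardinality of an `i`-packing. -/
noncomputable def SimpleGraph.packingNum {α : Type*} [Fintype α] (G : SimpleGraph α)
    (i : ℕ) : ℕ :=
  sSup {n | ∃ s : Finset α, G.IsPacking i ↑s ∧ s.card = n}

/-- A `k`-packing coloring: colors in `{1, …, k}`, and any two distinct vertices sharing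
color `i` are at distance greater than `i`. -/
def SimpleGraph.IsPackingColoring {α : Type*} (G : SimpleGraph α) (k : ℕ) (c : α → ℕ) :
    Prop :=
  (∀ v, c v ∈ Finset.Icc 1 k) ∧ ∀ u v, u ≠ v → c u = c v → c u < G.dist u v

/-- The packing chromatic number: the least `k` admitting a `k`-packing coloring. -/
noncomputable def SimpleGraph.packingChromatic {α : Type*} (G : SimpleGraph α) : ℕ :=
  sInf {k | ∃ c : α → ℕ, G.IsPackingColoring k c}

/-- `d(G) = 1` if `G` is complete, and `diam(G) - 1` otherwise. -/
noncomputable def SimpleGraph.dval {α : Type*} [Fintype α] (G : SimpleGraph α) : ℕ :=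
  letI := Classical.dec (G = (⊤ : SimpleGraph α))
  if G = (⊤ : SimpleGraph α) then 1 else G.diam - 1

lemma card_le_indepNum {α : Type*} [Fintype α] (G : SimpleGraph α) (s : Finset α)
    (hs : G.IndepSet ↑s) : s.card ≤ G.indepNum' := by
  apply le_csSup
  · exact ⟨Fintype.card α, by rintro n ⟨u, -, rfl⟩; exact u.card_le_univ⟩
  · exact ⟨s, hs, rfl⟩

lemma indepNum_le {α : Type*} [Fintype α] (G : SimpleGraph α) (n : ℕ)
    (h : ∀ s : Finset α, G.IndepSet ↑s → s.card ≤ n) : G.indepNum' ≤ n := by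
  apply csSup_le
  · exact ⟨0, ∅, by simp [SimpleGraph.IndepSet], by simp⟩
  · rintro m ⟨u, hu, rfl⟩; exact h u hu

lemma lex_indep_card_le {α β : Type*} [Fintype α] [Fintype β]
    (G : SimpleGraph α) (H : SimpleGraph β) (u : Finset (α × β))
    (hu : (G.lexProd H).IndepSet ↑u) : u.card ≤ G.indepNum' * H.indepNum' := by
  classical
  set p := u.image Prod.fst with hp_def
  have hp : G.IndepSet ↑p := by
    intro a ha b hb hab hadj
    simp only [hp_def, Finset.coe_image, Set.mem_image, Finset.mem_coe] at ha hb
    obtain ⟨x, hx, rfl⟩ := ha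
    obtain ⟨y, hy, rfl⟩ := hb
    have hxy : x ≠ y := fun h => hab (by rw [h])
    exact hu x hx y hy hxy (Or.inl hadj)
  have hcard : u.card = ∑ a ∈ p, (u.filter fun x => x.1 = a).card :=
    Finset.card_eq_sum_card_fiberwise (fun x hx => Finset.mem_image_of_mem _ hx)
  have hfiber : ∀ a ∈ p, (u.filter fun x => x.1 = a).card ≤ H.indepNum' := by
    intro a _
    set w := (u.filter fun x => x.1 = a).image Prod.snd with hw_def
    have hinj : Set.InjOn Prod.snd (((u.filter fun x => x.1 = a) : Finset (α × β)) : Set (α × β)) := by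
      intro x hx y hy hxy
      simp only [Finset.coe_filter, Set.mem_setOf_eq] at hx hy
      exact Prod.ext (hx.2.trans hy.2.symm) hxy
    have hcard2 : (u.filter fun x => x.1 = a).card = w.card :=
      (Finset.card_image_of_injOn hinj).symm
    rw [hcard2]
    apply card_le_indepNum
    intro x hx y hy hxy hadj
    simp only [hw_def, Finset.coe_image, Set.mem_image, Finset.mem_coe,
      Finset.mem_filter] at hx hy
    obtain ⟨⟨x1, x2⟩, ⟨hxu, hx1⟩, hx2⟩ := hx
    obtain ⟨⟨y1, y2⟩, ⟨hyu, hy1⟩, hy2⟩ := hy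
    have hne : (x1, x2) ≠ (y1, y2) := by
      intro h
      exact hxy (by rw [← hx2, ← hy2, h])
    exact hu _ hxu _ hyu hne
      (Or.inr ⟨hx1.trans hy1.symm, hx2 ▸ hy2 ▸ hadj⟩)
  calc u.card = ∑ a ∈ p, (u.filter fun x => x.1 = a).card := hcard
    _ ≤ ∑ _a ∈ p, H.indepNum' := Finset.sum_le_sum hfiber
    _ = p.card * H.indepNum' := by rw [Finset.sum_const, smul_eq_mul]
    _ ≤ G.indepNum' * H.indepNum' :=
      Nat.mul_le_mul_right _ (card_le_indepNum G p hp)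

theorem maxIndepSet_lexProd {α β : Type*} [Fintype α] [Fintype β]
    (G : SimpleGraph α) (H : SimpleGraph β) (s : Finset α) (t : Finset β)
    (hs : G.IndepSet ↑s) (hsc : s.card = G.indepNum')
    (ht : H.IndepSet ↑t) (htc : t.card = H.indepNum') :
    (G.lexProd H).IndepSet ↑(s ×ˢ t) ∧ (s ×ˢ t).card = (G.lexProd H).indepNum' := by
  have hindep : (G.lexProd H).IndepSet ↑(s ×ˢ t) := by
    rintro ⟨a, x⟩ hax ⟨b, y⟩ hby hne hadj
    simp only [Finset.coe_product, Set.mem_prod, Finset.mem_coe] at hax hby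
    rcases hadj with h | ⟨rfl, h⟩
    · have hab : a ≠ b := fun e => by subst e; exact G.irrefl h
      exact hs a hax.1 b hby.1 hab h
    · have hxy : x ≠ y := fun e => hne (by rw [e])
      exact ht x hax.2 y hby.2 hxy h
  refine ⟨hindep, le_antisymm (card_le_indepNum _ _ hindep) ?_⟩
  apply indepNum_le
  intro u hu
  calc u.card ≤ G.indepNum' * H.indepNum' := lex_indep_card_le G H u hu
    _ = s.card * t.card := by rw [hsc, htc]
    _ = (s ×ˢ t).card := (Finset.card_product s t).symm
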